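/- Let Γ act on a countable set X and let w : X → ℝ be positive with each x ↦ w(gx)/w(x) bounded. If there exists a w-compression system, then there exists no w-invariant mean on X. -/

import Mathlib

/-- A real-valued function on `X` is bounded. -/
def IsBdd {X : Type*} (f : X → ℝ) : Prop := ∃ M : ℝ, ∀ x, |f x| ≤ M

/-- A `w`-invariant mean, viewed as a positive normalized linear functional on
bounded functions: `∫ F(gx) dμ(x) = ∫ F(x)·(w(g⁻¹x)/w(x)) dμ(x)`. -/
structure IsWInvMean (Γ X : Type*) [Group Γ] [MulAction Γ X]
    (w : X → ℝ) (φ : (X → ℝ) → ℝ) : Prop where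
  nonneg : ∀ f : X → ℝ, IsBdd f → (∀ x, 0 ≤ f x) → 0 ≤ φ f
  map_add : ∀ f g : X → ℝ, φ (f + g) = φ f + φ g
  map_smul : ∀ (c : ℝ) (f : X → ℝ), φ (c • f) = c * φ f
  norm_one : φ (fun _ => 1) = 1
  inv : ∀ (g : Γ) (f : X → ℝ), IsBdd f →
    φ (fun x => f (g • x)) = φ (fun x => f x * (w (g⁻¹ • x) / w x))

/-- If there exists a `w`-compression system (a finite `T ⊆ Γ` and bounded
nonnegative functions `Ψ_g` with `∑_{g∈T} Ψ_g(x) = 1` and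
`∑_{g∈T} Ψ_g(g⁻¹x)·w(g⁻¹x)/w(x) < 1/2` for all `x`), then there is no
`w`-invariant mean. -/
theorem no_w_invariant_mean_of_compression
    {Γ X : Type*} [Group Γ] [Countable Γ] [Countable X] [MulAction Γ X]
    (w : X → ℝ) (hw : ∀ x, 0 < w x)
    (hbdd : ∀ g : Γ, ∃ M : ℝ, ∀ x, w (g • x) / w x ≤ M)
    (T : Finset Γ) (Ψ : Γ → X → ℝ)
    (hnonneg : ∀ g x, 0 ≤ Ψ g x)
    (hΨbdd : ∀ g ∈ T, IsBdd (Ψ g))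
    (hsum : ∀ x, ∑ g ∈ T, Ψ g x = 1)
    (hcomp : ∀ x, ∑ g ∈ T, Ψ g (g⁻¹ • x) * (w (g⁻¹ • x) / w x) < 1 / 2) :
    ¬ ∃ φ : (X → ℝ) → ℝ, IsWInvMean Γ X w φ := by
  rintro ⟨φ, hφ⟩
  classical
  have hzero : φ 0 = 0 := by
    have := hφ.map_smul 0 0
    simpa using this
  -- φ of a finite sum of functions
  have key : ∀ (S : Finset Γ) (F : Γ → X → ℝ),
      φ (fun x => ∑ g ∈ S, F g x) = ∑ g ∈ S, φ (F g) := by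
    intro S F
    induction S using Finset.induction_on with
    | empty => simpa using (show φ (fun _ => 0) = 0 from hzero)
    | insert _ _ hnot ih =>
      rename_i a s
      have : (fun x => ∑ g ∈ insert a s, F g x)
          = F a + fun x => ∑ g ∈ s, F g x := by
        funext x
        simp [Finset.sum_insert hnot]
      rw [this, hφ.map_add, ih, Finset.sum_insert hnot]
  -- each Ψ g translates
  have htrans : ∀ g ∈ T,
      φ (Ψ g) = φ (fun x => Ψ g (g⁻¹ • x) * (w (g⁻¹ • x) / w x)) := by
    intro g hg
    obtain ⟨M, hM⟩ := hΨbdd g hg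
    have hb : IsBdd (fun x => Ψ g (g⁻¹ • x)) := ⟨M, fun x => hM _⟩
    have := hφ.inv g (fun x => Ψ g (g⁻¹ • x)) hb
    simpa [inv_smul_smul] using this
  set H : X → ℝ := fun x => ∑ g ∈ T, Ψ g (g⁻¹ • x) * (w (g⁻¹ • x) / w x) with hH
  have hHnonneg : ∀ x, 0 ≤ H x := by
    intro x
    apply Finset.sum_nonneg
    intro g _
    exact mul_nonneg (hnonneg _ _) (div_nonneg (hw _).le (hw _).le)
  -- φ H = 1
  have hφH : φ H = 1 := by
    have h1 : φ (fun x => ∑ g ∈ T, Ψ g x) = 1 := by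
      have : (fun x => ∑ g ∈ T, Ψ g x) = (fun _ : X => (1 : ℝ)) := by
        funext x; exact hsum x
      rw [this, hφ.norm_one]
    calc φ H = ∑ g ∈ T, φ (fun x => Ψ g (g⁻¹ • x) * (w (g⁻¹ • x) / w x)) :=
          key T _
      _ = ∑ g ∈ T, φ (Ψ g) := by
          refine Finset.sum_congr rfl fun g hg => (htrans g hg).symm
      _ = φ (fun x => ∑ g ∈ T, Ψ g x) := (key T Ψ).symm
      _ = 1 := h1
  -- the function 1/2 - H is nonnegative and bounded
  have hfnonneg : ∀ x, (0:ℝ) ≤ 1 / 2 - H x := fun x => by linarith [hcomp x]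
  have hfbdd : IsBdd (fun x => 1 / 2 - H x) :=
    ⟨1 / 2, fun x => abs_le.mpr ⟨by linarith [hfnonneg x], by linarith [hHnonneg x]⟩⟩
  have hpos : 0 ≤ φ (fun x => 1 / 2 - H x) := hφ.nonneg _ hfbdd hfnonneg
  have hadd : φ (fun x => 1 / 2 - H x) + φ H = 1 / 2 := by
    rw [← hφ.map_add]
    have heq : ((fun x => 1 / 2 - H x) + H) = (1 / 2 : ℝ) • (fun _ : X => (1 : ℝ)) := by
      funext x
      simp [Pi.add_apply]
    rw [heq, hφ.map_smul, hφ.norm_one]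
    norm_num
  rw [hφH] at hadd
  linarith
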